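/- Let ℘ be the Weierstrass elliptic function with invariants g₂, g₃ (discriminant Δ = g₂³ − 27g₃² ≠ 0), set h(w) = 4w³ − g₂w − g₃, and let B ∈ ℂ with h(B) ≠ 0. Then the functions ξ^{±}(t) = √(B − ℘(t+ω₃)) · exp(±(1/2)√(h(B)) ∫₀^t ds/(B − ℘(s+ω₃))) solve the Lamé equation ξ̈ = (B + 2℘(t+ω₃)) ξ (on an interval where B − ℘(t+ω₃) ≠ 0), and their Wronskian equals the constant ∓√(h(B)). -/

import Mathlib

lemma lame_key (g₂ g₃ B r ε a a1 a2 G G1 : ℂ) (ha : a ≠ 0)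
    (h1 : a ^ 2 = B - G) (h2 : 2 * a * a1 = -G1)
    (h3 : 2 * a1 ^ 2 + 2 * a * a2 = -(6 * G ^ 2 - g₂ / 2))
    (h4 : G1 ^ 2 = 4 * G ^ 3 - g₂ * G - g₃)
    (h5 : r ^ 2 = 4 * B ^ 3 - g₂ * B - g₃)
    (hε : ε ^ 2 = 1) :
    (a2 + ε * ((1/2) * r) * (G1 * ((B - G) ^ 2)⁻¹ * a + (B - G)⁻¹ * a1))
      + (a1 + ε * ((1/2) * r) * (B - G)⁻¹ * a) * (ε * ((1/2) * r) * (B - G)⁻¹)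
      = (B + 2 * G) * a := by
  rw [← h1]
  field_simp
  linear_combination (2*ε*r - (2*a*a1 - G1)) * h2 + r^2 * hε + 2*a^2 * h3 - h4 + h5
    + (-4*(B+2*G)*a^2 + g₂ - 12*G^2 - 4*(B+2*G)*(B-G)) * h1

lemma lame_aux (g₂ g₃ B r : ℂ)
    (hr : r ^ 2 = 4 * B ^ 3 - g₂ * B - g₃)
    (g : ℝ → ℂ) (hg : ContDiff ℝ 2 g)
    (hg' : ∀ t, (deriv g t) ^ 2 = 4 * g t ^ 3 - g₂ * g t - g₃)
    (hg'' : ∀ t, deriv (deriv g) t = 6 * g t ^ 2 - g₂ / 2)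
    (c d : ℝ) (hc : c < 0) (hd : 0 < d)
    (hne : ∀ t ∈ Set.Ioo c d, B - g t ≠ 0)
    (q : ℝ → ℂ) (hq : ContDiffOn ℝ 2 q (Set.Ioo c d))
    (hq2 : ∀ t ∈ Set.Ioo c d, q t ^ 2 = B - g t)
    (ε : ℂ) (hε : ε ^ 2 = 1)
    (ξ : ℝ → ℂ)
    (hξ : ∀ t ∈ Set.Ioo c d, ξ t =
      q t * Complex.exp (ε * ((1 / 2) * r) * ∫ s in (0:ℝ)..t, (B - g s)⁻¹)) :
    (∀ t ∈ Set.Ioo c d, deriv ξ t =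
      (deriv q t + ε * ((1 / 2) * r) * (B - g t)⁻¹ * q t) *
        Complex.exp (ε * ((1 / 2) * r) * ∫ s in (0:ℝ)..t, (B - g s)⁻¹)) ∧
    (∀ t ∈ Set.Ioo c d, deriv (deriv ξ) t = (B + 2 * g t) * ξ t) := by
  have hsO : IsOpen (Set.Ioo c d) := isOpen_Ioo
  have h0 : (0:ℝ) ∈ Set.Ioo c d := ⟨hc, hd⟩
  have hgc : Continuous g := hg.continuous
  have hgd : ∀ t, HasDerivAt g (deriv g t) t := fun t =>
    ((hg.differentiable (by norm_num)) t).hasDerivAt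
  have hg1d : Differentiable ℝ (deriv g) := by
    have h2 : ContDiff ℝ ((1:ℕ) + 1) g := by exact_mod_cast hg
    exact (contDiff_succ_iff_deriv.mp h2).2.2.differentiable (by norm_num)
  -- the integral
  set I : ℝ → ℂ := fun t => ∫ s in (0:ℝ)..t, (B - g s)⁻¹ with hI_def
  have hfc : ContinuousOn (fun s => (B - g s)⁻¹) (Set.Ioo c d) :=
    ((continuous_const.sub hgc).continuousOn).inv₀ hne
  have hI : ∀ t ∈ Set.Ioo c d, HasDerivAt I ((B - g t)⁻¹) t := by
    intro t ht
    have hsub : Set.uIcc (0:ℝ) t ⊆ Set.Ioo c d :=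
      Set.OrdConnected.uIcc_subset Set.ordConnected_Ioo h0 ht
    have hint : IntervalIntegrable (fun s => (B - g s)⁻¹) MeasureTheory.volume 0 t :=
      (hfc.mono hsub).intervalIntegrable
    exact intervalIntegral.integral_hasDerivAt_right hint
      (hfc.stronglyMeasurableAtFilter hsO t ht)
      (hfc.continuousAt (hsO.mem_nhds ht))
  -- q derivatives
  have hqd : ∀ t ∈ Set.Ioo c d, HasDerivAt q (deriv q t) t := fun t ht =>
    (((hq.differentiableOn (by norm_num)).differentiableAt (hsO.mem_nhds ht))).hasDerivAt
  have hq1 : ContDiffOn ℝ 1 (deriv q) (Set.Ioo c d) :=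
    hq.deriv_of_isOpen hsO (by norm_num)
  have hq1d : ∀ t ∈ Set.Ioo c d, HasDerivAt (deriv q) (deriv (deriv q) t) t := fun t ht =>
    (((hq1.differentiableOn (by norm_num)).differentiableAt (hsO.mem_nhds ht))).hasDerivAt
  have hqne : ∀ t ∈ Set.Ioo c d, q t ≠ 0 := by
    intro t ht h
    exact hne t ht (by rw [← hq2 t ht, h]; ring)
  -- relation: 2 q q' = -g'
  have rel2 : ∀ t ∈ Set.Ioo c d, 2 * q t * deriv q t = -(deriv g t) := by
    intro t ht
    have e1 : (fun x => q x ^ 2) =ᶠ[nhds t] (fun x => B - g x) :=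
      Filter.eventuallyEq_of_mem (hsO.mem_nhds ht) (fun x hx => hq2 x hx)
    have d1 := e1.deriv_eq
    have d2 : deriv (fun x => q x ^ 2) t = 2 * q t * deriv q t := by
      have hm := (hqd t ht).mul (hqd t ht)
      have hfun : (fun x => q x ^ 2) = fun x => q x * q x := by funext x; ring
      rw [hfun, show (fun x => q x * q x) = q * q from rfl, hm.deriv]; ring
    have d3 : deriv (fun x => B - g x) t = -(deriv g t) := by
      simpa using ((hasDerivAt_const t B).sub (hgd t)).deriv
    rw [d2, d3] at d1
    exact d1
  -- relation: 2 q'^2 + 2 q q'' = -(6 g^2 - g₂/2)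
  have rel3 : ∀ t ∈ Set.Ioo c d,
      2 * (deriv q t) ^ 2 + 2 * q t * deriv (deriv q) t = -(6 * g t ^ 2 - g₂ / 2) := by
    intro t ht
    have e1 : (fun x => 2 * q x * deriv q x) =ᶠ[nhds t] (fun x => -(deriv g x)) :=
      Filter.eventuallyEq_of_mem (hsO.mem_nhds ht) (fun x hx => rel2 x hx)
    have d1 := e1.deriv_eq
    have d2 : deriv (fun x => 2 * q x * deriv q x) t =
        2 * deriv q t * deriv q t + 2 * q t * deriv (deriv q) t := by
      exact (((hqd t ht).const_mul 2).mul (hq1d t ht)).deriv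
    have d3 : deriv (fun x => -(deriv g x)) t = -(deriv (deriv g) t) := by
      simpa using ((hg1d t).hasDerivAt.neg).deriv
    rw [d2, d3, hg'' t] at d1
    linear_combination d1
  -- the exponential factor
  set E : ℝ → ℂ := fun t => Complex.exp (ε * ((1 / 2) * r) * I t) with hE_def
  have hE : ∀ t ∈ Set.Ioo c d,
      HasDerivAt E (ε * ((1 / 2) * r) * (B - g t)⁻¹ * E t) t := by
    intro t ht
    have h := (((hI t ht).const_mul (ε * ((1 / 2) * r)))).cexp
    convert h using 1
    ring
  have hF : ∀ t ∈ Set.Ioo c d,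
      HasDerivAt (fun x => q x * E x)
        ((deriv q t + ε * ((1 / 2) * r) * (B - g t)⁻¹ * q t) * E t) t := by
    intro t ht
    have h := (hqd t ht).mul (hE t ht)
    refine h.congr_deriv ?_
    ring
  have part1 : ∀ t ∈ Set.Ioo c d, deriv ξ t =
      (deriv q t + ε * ((1 / 2) * r) * (B - g t)⁻¹ * q t) * E t := by
    intro t ht
    have e1 : ξ =ᶠ[nhds t] (fun x => q x * E x) :=
      Filter.eventuallyEq_of_mem (hsO.mem_nhds ht) (fun x hx => hξ x hx)
    rw [e1.deriv_eq]
    exact (hF t ht).deriv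
  refine ⟨part1, ?_⟩
  intro t ht
  -- second derivative
  set D : ℝ → ℂ := fun x => (deriv q x + ε * ((1 / 2) * r) * (B - g x)⁻¹ * q x) * E x
    with hD_def
  have e2 : deriv ξ =ᶠ[nhds t] D :=
    Filter.eventuallyEq_of_mem (hsO.mem_nhds ht) (fun x hx => part1 x hx)
  rw [e2.deriv_eq]
  have hu : HasDerivAt (fun x => (B - g x)⁻¹) (deriv g t * ((B - g t) ^ 2)⁻¹) t := by
    have hinv : HasDerivAt (fun y : ℂ => y⁻¹) (-((B - g t) ^ 2)⁻¹) (B - g t) :=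
      hasDerivAt_inv (hne t ht)
    have h : HasDerivAt (fun x => (B - g x)⁻¹)
        ((0 - deriv g t) • -((B - g t) ^ 2)⁻¹) t :=
      HasDerivAt.scomp_of_eq (x := t) (hg := hinv) (hh := (hasDerivAt_const t B).sub (hgd t)) (hy := rfl)
    convert h using 1
    simp only [smul_eq_mul]
    ring
  have hA : HasDerivAt (fun x => deriv q x + ε * ((1 / 2) * r) * (B - g x)⁻¹ * q x)
      (deriv (deriv q) t + ε * ((1 / 2) * r) *
        (deriv g t * ((B - g t) ^ 2)⁻¹ * q t + (B - g t)⁻¹ * deriv q t)) t := by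
    have h := (hq1d t ht).add (((hu.const_mul (ε * ((1 / 2) * r))).mul (hqd t ht)))
    refine h.congr_deriv ?_
    ring
  have hD : HasDerivAt D
      ((deriv (deriv q) t + ε * ((1 / 2) * r) *
          (deriv g t * ((B - g t) ^ 2)⁻¹ * q t + (B - g t)⁻¹ * deriv q t)) * E t
        + (deriv q t + ε * ((1 / 2) * r) * (B - g t)⁻¹ * q t) *
          (ε * ((1 / 2) * r) * (B - g t)⁻¹ * E t)) t := hA.mul (hE t ht)
  rw [hD.deriv, hξ t ht]
  have key := lame_key g₂ g₃ B r ε (q t) (deriv q t) (deriv (deriv q) t) (g t) (deriv g t)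
    (hqne t ht) (hq2 t ht) (rel2 t ht) (rel3 t ht) (hg' t) hr hε
  linear_combination (E t) * key

theorem lame_hermite_halphen (g₂ g₃ B r : ℂ)
    (hΔ : g₂ ^ 3 - 27 * g₃ ^ 2 ≠ 0)
    (hhB : 4 * B ^ 3 - g₂ * B - g₃ ≠ 0)
    (hr : r ^ 2 = 4 * B ^ 3 - g₂ * B - g₃)
    (g : ℝ → ℂ) (hg : ContDiff ℝ 2 g)
    (hg' : ∀ t, (deriv g t) ^ 2 = 4 * g t ^ 3 - g₂ * g t - g₃)
    (hg'' : ∀ t, deriv (deriv g) t = 6 * g t ^ 2 - g₂ / 2)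
    (c d : ℝ) (hc : c < 0) (hd : 0 < d)
    (hne : ∀ t ∈ Set.Ioo c d, B - g t ≠ 0)
    (q : ℝ → ℂ) (hq : ContDiffOn ℝ 2 q (Set.Ioo c d))
    (hq2 : ∀ t ∈ Set.Ioo c d, q t ^ 2 = B - g t)
    (ξp ξm : ℝ → ℂ)
    (hξp : ∀ t ∈ Set.Ioo c d, ξp t =
      q t * Complex.exp ((1 / 2) * r * ∫ s in (0:ℝ)..t, (B - g s)⁻¹))
    (hξm : ∀ t ∈ Set.Ioo c d, ξm t =
      q t * Complex.exp (-((1 / 2) * r) * ∫ s in (0:ℝ)..t, (B - g s)⁻¹)) :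
    (∀ t ∈ Set.Ioo c d, deriv (deriv ξp) t = (B + 2 * g t) * ξp t) ∧
    (∀ t ∈ Set.Ioo c d, deriv (deriv ξm) t = (B + 2 * g t) * ξm t) ∧
    (∀ t ∈ Set.Ioo c d, ξp t * deriv ξm t - ξm t * deriv ξp t = -r) := by
  have hξp' : ∀ t ∈ Set.Ioo c d, ξp t =
      q t * Complex.exp ((1:ℂ) * ((1 / 2) * r) * ∫ s in (0:ℝ)..t, (B - g s)⁻¹) := by
    intro t ht
    rw [hξp t ht, show ((1:ℂ) * ((1 / 2) * r)) = (1 / 2) * r by ring]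
  have hξm' : ∀ t ∈ Set.Ioo c d, ξm t =
      q t * Complex.exp ((-1:ℂ) * ((1 / 2) * r) * ∫ s in (0:ℝ)..t, (B - g s)⁻¹) := by
    intro t ht
    rw [hξm t ht, show ((-1:ℂ) * ((1 / 2) * r)) = -((1 / 2) * r) by ring]
  have hauxp := lame_aux g₂ g₃ B r hr g hg hg' hg'' c d hc hd hne q hq hq2 1 (by norm_num)
    ξp hξp'
  have hauxm := lame_aux g₂ g₃ B r hr g hg hg' hg'' c d hc hd hne q hq hq2 (-1) (by norm_num)
    ξm hξm'
  refine ⟨hauxp.2, hauxm.2, ?_⟩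
  intro t ht
  have dp : deriv ξp t = (deriv q t + (1 / 2) * r * (B - g t)⁻¹ * q t) *
      Complex.exp ((1 / 2) * r * ∫ s in (0:ℝ)..t, (B - g s)⁻¹) := by
    rw [hauxp.1 t ht, show ((1:ℂ) * ((1 / 2) * r)) = (1 / 2) * r by ring]
  have dm : deriv ξm t = (deriv q t + -((1 / 2) * r) * (B - g t)⁻¹ * q t) *
      Complex.exp (-((1 / 2) * r) * ∫ s in (0:ℝ)..t, (B - g s)⁻¹) := by
    rw [hauxm.1 t ht, show ((-1:ℂ) * ((1 / 2) * r)) = -((1 / 2) * r) by ring]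
  rw [hξp t ht, hξm t ht, dp, dm]
  have hq2t := hq2 t ht
  have huu : (B - g t) * (B - g t)⁻¹ = 1 := mul_inv_cancel₀ (hne t ht)
  have hEE : Complex.exp ((1 / 2) * r * ∫ s in (0:ℝ)..t, (B - g s)⁻¹) *
      Complex.exp (-((1 / 2) * r) * ∫ s in (0:ℝ)..t, (B - g s)⁻¹) = 1 := by
    rw [← Complex.exp_add,
      show ((1 / 2) * r * ∫ s in (0:ℝ)..t, (B - g s)⁻¹) +
        (-((1 / 2) * r) * ∫ s in (0:ℝ)..t, (B - g s)⁻¹) = 0 by ring,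
      Complex.exp_zero]
  linear_combination (-r * (B - g t)⁻¹ * Complex.exp ((1 / 2) * r * ∫ s in (0:ℝ)..t, (B - g s)⁻¹)
      * Complex.exp (-((1 / 2) * r) * ∫ s in (0:ℝ)..t, (B - g s)⁻¹)) * hq2t
    + (-r * Complex.exp ((1 / 2) * r * ∫ s in (0:ℝ)..t, (B - g s)⁻¹)
      * Complex.exp (-((1 / 2) * r) * ∫ s in (0:ℝ)..t, (B - g s)⁻¹)) * huu
    + (-r) * hEE
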